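/- Let g have signature (+,−,…,−) on ℝ^{n+1} (n ≥ 2), let Π be a codimension-2 spacelike subspace, and let H be a timelike hyperplane containing Π (i.e. H contains some u with g(u,u) > 0). Let v and w be the two non-proportional future-directed lightlike vectors orthogonal to Π. Then v and w lie strictly on opposite sides of H: for any linear functional φ with kernel H, φ(v) and φ(w) are nonzero with opposite signs. -/

import Mathlib

/-- The standard Minkowski bilinear form of signature `(+,−,…,−)` on `ℝ^{n+1}`. -/
def mform {n : ℕ} (v w : Fin (n + 1) → ℝ) : ℝ :=
  v 0 * w 0 - ∑ i : Fin n, v i.succ * w i.succ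

section aux

variable {n : ℕ}

lemma mform_comm (x y : Fin (n + 1) → ℝ) : mform x y = mform y x := by
  simp only [mform, mul_comm]

lemma mform_add_left (x y z : Fin (n + 1) → ℝ) :
    mform (x + y) z = mform x z + mform y z := by
  simp only [mform, Pi.add_apply, add_mul, Finset.sum_add_distrib]; ring

lemma mform_smul_left (c : ℝ) (x z : Fin (n + 1) → ℝ) :
    mform (c • x) z = c * mform x z := by
  simp only [mform, Pi.smul_apply, smul_eq_mul, mul_assoc, ← Finset.mul_sum]; ring

lemma mform_add_right (x y z : Fin (n + 1) → ℝ) :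
    mform x (y + z) = mform x y + mform x z := by
  rw [mform_comm, mform_add_left, mform_comm y x, mform_comm z x]

lemma mform_smul_right (c : ℝ) (x z : Fin (n + 1) → ℝ) :
    mform x (c • z) = c * mform x z := by
  rw [mform_comm, mform_smul_left, mform_comm z x]

lemma mform_sub_left (x y z : Fin (n + 1) → ℝ) :
    mform (x - y) z = mform x z - mform y z := by
  have := mform_add_left (x - y) y z; simp at this; linarith

lemma mform_sub_right (x y z : Fin (n + 1) → ℝ) :
    mform x (y - z) = mform x y - mform x z := by
  rw [mform_comm, mform_sub_left, mform_comm y x, mform_comm z x]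

/-- The Minkowski form as a bilinear form. -/
def mB (n : ℕ) : LinearMap.BilinForm ℝ (Fin (n + 1) → ℝ) :=
  LinearMap.mk₂ ℝ mform mform_add_left mform_smul_left mform_add_right mform_smul_right

@[simp] lemma mB_apply (x y : Fin (n + 1) → ℝ) : mB n x y = mform x y := rfl

lemma mB_refl : (mB n).IsRefl := by
  intro x y h
  simpa [mform_comm y x] using h

lemma mB_nondeg : (mB n).Nondegenerate := by
  refine (LinearMap.IsRefl.nondegenerate_iff_separatingLeft mB_refl).mpr ?_
  intro x hx
  have h0 : x 0 = 0 := by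
    have := hx (Pi.single 0 1)
    simpa [mform, Pi.single_apply, Fin.succ_ne_zero] using this
  have hs : ∀ j : Fin n, x j.succ = 0 := by
    intro j
    have := hx (Pi.single j.succ 1)
    simp [mform, Pi.single_apply, (Fin.succ_ne_zero j).symm, Fin.succ_inj] at this
    simpa [Finset.sum_ite_eq' Finset.univ j (fun i => x (Fin.succ i))] using this
  funext i
  refine Fin.cases h0 (fun j => hs j) i

/-- The orthogonal complement of a timelike vector is negative definite. -/
lemma perp_neg {T x : Fin (n + 1) → ℝ} (hT : 0 < mform T T)
    (hperp : mform T x = 0) (hx : x ≠ 0) : mform x x < 0 := by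
  have hCS : (∑ i : Fin n, T i.succ * x i.succ) * (∑ i : Fin n, T i.succ * x i.succ) ≤
      (∑ i : Fin n, T i.succ * T i.succ) * (∑ i : Fin n, x i.succ * x i.succ) := by
    have h := Finset.sum_mul_sq_le_sq_mul_sq Finset.univ
      (fun i : Fin n => T i.succ) (fun i : Fin n => x i.succ)
    simpa [pow_two] using h
  have hS0 : 0 ≤ ∑ i : Fin n, T i.succ * T i.succ :=
    Finset.sum_nonneg fun i _ => mul_self_nonneg _
  have hX0 : 0 ≤ ∑ i : Fin n, x i.succ * x i.succ :=
    Finset.sum_nonneg fun i _ => mul_self_nonneg _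
  have hTT : (∑ i : Fin n, T i.succ * T i.succ) < T 0 * T 0 := by
    have := hT; simp only [mform] at this; linarith
  have hP : T 0 * x 0 = ∑ i : Fin n, T i.succ * x i.succ := by
    have := hperp; simp only [mform] at this; linarith
  rcases eq_or_lt_of_le hX0 with hX | hX
  · -- tail of x vanishes, hence x 0 = 0, hence x = 0, contradiction
    have htail : ∀ j : Fin n, x j.succ = 0 := by
      have h := (Finset.sum_eq_zero_iff_of_nonneg
        (fun i (_ : i ∈ Finset.univ) => mul_self_nonneg (x i.succ))).mp hX.symm
      intro j
      exact mul_self_eq_zero.mp (h j (Finset.mem_univ j))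
    have hC0 : (∑ i : Fin n, T i.succ * x i.succ) = 0 := by
      apply Finset.sum_eq_zero; intro i _; rw [htail i, mul_zero]
    have hT0 : T 0 ≠ 0 := by
      intro h; rw [h] at hTT; nlinarith
    have hx0 : x 0 = 0 := by
      have := hP; rw [hC0] at this
      exact (mul_eq_zero.mp this).resolve_left hT0
    exact absurd (funext fun i => Fin.cases hx0 htail i) hx
  · simp only [mform]
    have hP2 : (T 0 * x 0) * (T 0 * x 0) =
        (∑ i : Fin n, T i.succ * x i.succ) * (∑ i : Fin n, T i.succ * x i.succ) := by
      rw [hP]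
    nlinarith [hP2, hCS, mul_pos (sub_pos.mpr hTT) hX, mul_self_nonneg (T 0)]

/-- Two non-proportional future-directed null vectors pair positively. -/
lemma null_pair_pos {T v w : Fin (n + 1) → ℝ} (hT : 0 < mform T T)
    (hv : mform v v = 0) (hw : mform w w = 0)
    (hvf : 0 < mform T v) (hwf : 0 < mform T w)
    (hnp : ¬ ∃ c : ℝ, w = c • v) : 0 < mform v w := by
  set s := mform T v with hs
  set t := mform T w with ht
  set u := t • v - s • w with hu
  have hTu : mform T u = 0 := by
    rw [hu, mform_sub_right, mform_smul_right, mform_smul_right, ← hs, ← ht]; ring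
  have huu : mform u u = -(2 * t * s * mform v w) := by
    simp only [hu, mform_sub_left, mform_sub_right, mform_smul_left, mform_smul_right,
      hv, hw, mform_comm w v]
    ring
  by_cases h0 : u = 0
  · exfalso
    have : s • w = t • v := by
      have := h0; rw [hu] at this; rw [sub_eq_zero] at this; exact this.symm
    have hw' : w = (s⁻¹ * t) • v := by
      have hsne : s ≠ 0 := ne_of_gt hvf
      calc w = s⁻¹ • (s • w) := by rw [smul_smul, inv_mul_cancel₀ hsne, one_smul]
        _ = s⁻¹ • (t • v) := by rw [this]
        _ = (s⁻¹ * t) • v := by rw [smul_smul]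
    exact hnp ⟨s⁻¹ * t, hw'⟩
  · have := perp_neg hT hTu h0
    rw [huu] at this
    nlinarith [mul_pos hwf hvf]

end aux

/-- Let `P` be a codimension-2 spacelike subspace and `H ⊇ P` a timelike
hyperplane. The two non-proportional future-directed lightlike vectors `v, w`
orthogonal to `P` lie strictly on opposite sides of `H`: for any linear functional
`φ` with kernel `H`, `φ(v)` and `φ(w)` are nonzero with opposite signs. -/
theorem stmt8 {n : ℕ} (hn : 2 ≤ n)
    (P H : Submodule ℝ (Fin (n + 1) → ℝ))
    (hPdim : Module.finrank ℝ P = n - 1)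
    (hPspace : ∀ z ∈ P, z ≠ 0 → mform z z < 0)
    (hHdim : Module.finrank ℝ H = n)
    (hPH : P ≤ H)
    (hHtime : ∃ u ∈ H, 0 < mform u u)
    (T : Fin (n + 1) → ℝ) (hT : 0 < mform T T)
    (v w : Fin (n + 1) → ℝ)
    (hvnull : mform v v = 0) (hwnull : mform w w = 0)
    (hvfut : 0 < mform T v) (hwfut : 0 < mform T w)
    (hvorth : ∀ z ∈ P, mform v z = 0) (hworth : ∀ z ∈ P, mform w z = 0)
    (hnprop : ¬ ∃ c : ℝ, w = c • v)
    (φ : (Fin (n + 1) → ℝ) →ₗ[ℝ] ℝ) (hφ : LinearMap.ker φ = H) :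
    φ v ≠ 0 ∧ φ w ≠ 0 ∧ φ v * φ w < 0 := by
  classical
  obtain ⟨u, huH, huT⟩ := hHtime
  have hdimV : Module.finrank ℝ (Fin (n + 1) → ℝ) = n + 1 := Module.finrank_fin_fun ℝ
  set Q : Submodule ℝ (Fin (n + 1) → ℝ) := (mB n).orthogonal P with hQdef
  have hQdim : Module.finrank ℝ Q = 2 := by
    rw [hQdef, LinearMap.BilinForm.finrank_orthogonal mB_nondeg, hdimV, hPdim]
    omega
  have hvQ : v ∈ Q := by
    intro z hz
    show mform z v = 0
    rw [mform_comm]; exact hvorth z hz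
  have hwQ : w ∈ Q := by
    intro z hz
    show mform z w = 0
    rw [mform_comm]; exact hworth z hz
  have hv0 : v ≠ 0 := by
    rintro rfl
    simp [mform] at hvfut
  have hli : LinearIndependent ℝ ![v, w] :=
    (LinearIndependent.pair_iff' hv0).mpr fun a ha => hnprop ⟨a, ha.symm⟩
  have hspan : Submodule.span ℝ ({v, w} : Set (Fin (n + 1) → ℝ)) = Q := by
    apply Submodule.eq_of_le_of_finrank_le
    · rw [Submodule.span_le]
      rintro x (rfl | rfl)
      exacts [hvQ, hwQ]
    · rw [hQdim]
      have hrange : Set.range ![v, w] = ({v, w} : Set (Fin (n + 1) → ℝ)) := by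
        ext x
        simp [Matrix.range_cons, Matrix.range_empty]
        tauto
      have := finrank_span_eq_card hli
      rw [hrange] at this
      rw [this]
      simp
  have hinf : P ⊓ Q = ⊥ := by
    rw [Submodule.eq_bot_iff]
    rintro z ⟨hzP, hzQ⟩
    by_contra hz0
    exact absurd (hzQ z hzP) (ne_of_lt (hPspace z hzP hz0))
  have hsup : P ⊔ Q = ⊤ := by
    apply Submodule.eq_top_of_finrank_eq
    have h1 := Submodule.finrank_sup_add_finrank_inf_eq P Q
    rw [hinf, finrank_bot, add_zero, hPdim, hQdim] at h1
    rw [hdimV]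
    omega
  have huPQ : u ∈ P ⊔ Q := hsup ▸ Submodule.mem_top
  obtain ⟨p, hpP, q, hqQ, hupq⟩ := Submodule.mem_sup.mp huPQ
  have hpq : mform p q = 0 := hqQ p hpP
  have hpp : mform p p ≤ 0 := by
    by_cases hp : p = 0
    · subst hp; simp [mform]
    · exact (hPspace p hpP hp).le
  have hqq : 0 < mform q q := by
    have hexp : mform (p + q) (p + q) = mform p p + 2 * mform p q + mform q q := by
      rw [mform_add_left, mform_add_right, mform_add_right, mform_comm q p]; ring
    rw [← hupq] at huT
    rw [hexp] at huT
    rw [hpq] at huT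
    linarith
  have hqH : q ∈ H := by
    have h1 := H.sub_mem huH (hPH hpP)
    have : u - p = q := by rw [← hupq]; abel
    rwa [this] at h1
  obtain ⟨a, b, hab⟩ := Submodule.mem_span_pair.mp (hspan ▸ hqQ)
  have hvw : 0 < mform v w := null_pair_pos hT hvnull hwnull hvfut hwfut hnprop
  have hqexp : mform q q = 2 * (a * b) * mform v w := by
    simp only [← hab, mform_add_left, mform_add_right, mform_smul_left, mform_smul_right,
      hvnull, hwnull, mform_comm w v]
    ring
  have habpos : 0 < a * b := by
    rw [hqexp] at hqq; nlinarith
  have ha : a ≠ 0 := fun h => by rw [h, zero_mul] at habpos; exact lt_irrefl 0 habpos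
  have hb : b ≠ 0 := fun h => by rw [h, mul_zero] at habpos; exact lt_irrefl 0 habpos
  have hφq : φ q = 0 := by
    have : q ∈ LinearMap.ker φ := by rw [hφ]; exact hqH
    exact this
  have hlin : a * φ v + b * φ w = 0 := by
    have h := congrArg φ hab
    rw [map_add, map_smul, map_smul, hφq] at h
    simpa using h
  -- If φ v = 0 and φ w = 0 then φ kills P ⊔ Q = ⊤, contradicting finrank H = n
  have key : φ v = 0 → φ w = 0 → False := by
    intro h1 h2
    have hker : H = ⊤ := by
      rw [← hφ, eq_top_iff, ← hsup, sup_le_iff]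
      constructor
      · intro z hz
        show z ∈ LinearMap.ker φ
        rw [hφ]; exact hPH hz
      · rw [← hspan, Submodule.span_le]
        rintro x (rfl | rfl) <;> simp [LinearMap.mem_ker, h1, h2]
    rw [hker, finrank_top, hdimV] at hHdim
    omega
  have hφv : φ v ≠ 0 := by
    intro h0
    apply key h0
    rw [h0, mul_zero, zero_add] at hlin
    exact (mul_eq_zero.mp hlin).resolve_left hb
  have hφw : φ w ≠ 0 := by
    intro h0
    refine key ?_ h0
    rw [h0, mul_zero, add_zero] at hlin
    exact (mul_eq_zero.mp hlin).resolve_left ha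
  refine ⟨hφv, hφw, ?_⟩
  have hw' : φ w = -(a / b) * φ v := by
    field_simp
    linarith [hlin]
  have hdiv : 0 < a / b := by
    have : a / b = a * b / (b * b) := by field_simp
    rw [this]
    exact div_pos habpos (mul_self_pos.mpr hb)
  rw [hw']
  have hv2 : 0 < φ v * φ v := mul_self_pos.mpr hφv
  nlinarith
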